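/- For a Tychonoff pseudocompact space X, the following are equivalent: (i) X is selectively ω-bounded; (ii) X is Ascoli; (iii) X is sequentially Ascoli. -/

import Mathlib

open Filter Topology Set

def SelectivelyOmegaBounded (X : Type*) [TopologicalSpace X] : Prop :=
  ∀ U : ℕ → Set X, (∀ n, IsOpen (U n)) → (∀ n, (U n).Nonempty) →
    ∃ x : ℕ → X, (∀ n, x n ∈ U n) ∧
      ∃ φ : ℕ → ℕ, StrictMono φ ∧ IsCompact (closure (Set.range (x ∘ φ)))

def Pseudocompact (X : Type*) [TopologicalSpace X] : Prop :=
  ∀ f : C(X, ℝ), ∃ M : ℝ, ∀ x, |f x| ≤ M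

def EquicontinuousSet {X : Type*} [TopologicalSpace X] (S : Set C(X, ℝ)) : Prop :=
  Equicontinuous (fun f : S => ⇑(f : C(X, ℝ)))

def AscoliSpace (X : Type*) [TopologicalSpace X] : Prop :=
  ∀ S : Set C(X, ℝ), IsCompact S → EquicontinuousSet S

def SeqAscoliSpace (X : Type*) [TopologicalSpace X] : Prop :=
  ∀ (f : ℕ → C(X, ℝ)) (g : C(X, ℝ)), Tendsto f atTop (𝓝 g) →
    EquicontinuousSet (insert g (Set.range f))

/-- From failure of selective ω-boundedness (witnessed by `U`), every compact set
meets only finitely many of the `U n`. -/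
lemma hits_finite {X : Type*} [TopologicalSpace X] [T2Space X] {U : ℕ → Set X}
    (hne : ∀ n, (U n).Nonempty)
    (hbad : ∀ x : ℕ → X, (∀ n, x n ∈ U n) → ∀ φ : ℕ → ℕ, StrictMono φ →
      ¬ IsCompact (closure (Set.range (x ∘ φ))))
    {C : Set X} (hC : IsCompact C) : {n | (C ∩ U n).Nonempty}.Finite := by
  by_contra hinf
  classical
  set x : ℕ → X := fun n => if h : (C ∩ U n).Nonempty then h.choose else (hne n).choose with hx
  have hxU : ∀ n, x n ∈ U n := by
    intro n
    by_cases h : (C ∩ U n).Nonempty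
    · simp only [hx, dif_pos h]; exact h.choose_spec.2
    · simp only [hx, dif_neg h]; exact (hne n).choose_spec
  have hinf' : (setOf fun n => (C ∩ U n).Nonempty).Infinite := hinf
  have hmono := Nat.nth_strictMono (p := fun n => (C ∩ U n).Nonempty) hinf'
  refine hbad x hxU _ hmono ?_
  have hsub : Set.range (x ∘ Nat.nth fun n => (C ∩ U n).Nonempty) ⊆ C := by
    rintro _ ⟨k, rfl⟩
    have hk : (C ∩ U (Nat.nth (fun n => (C ∩ U n).Nonempty) k)).Nonempty :=
      Nat.nth_mem_of_infinite hinf' k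
    simp only [Function.comp_apply, hx, dif_pos hk]
    exact hk.choose_spec.1
  exact hC.of_isClosed_subset isClosed_closure (closure_minimal hsub hC.isClosed)

/-- Feeble compactness consequence of pseudocompactness: a sequence of nonempty open-ish
sets (carrying bump functions) has a cluster point. -/
lemma exists_cluster {X : Type*} [TopologicalSpace X] (hpc : Pseudocompact X)
    (W : ℕ → Set X) (q : ℕ → C(X, ℝ))
    (hq0 : ∀ n x, 0 ≤ q n x) (hpeak : ∀ n, ∃ p, q n p = 1)
    (hsupp : ∀ n x, q n x ≠ 0 → x ∈ W n) :
    ∃ z : X, ∀ V : Set X, IsOpen V → z ∈ V → ∀ N : ℕ, ∃ n, N ≤ n ∧ (V ∩ W n).Nonempty := by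
  by_contra hcl
  push_neg at hcl
  choose V hVo hVz N hN using hcl
  set Q : ℕ → X → ℝ := fun n x => (n : ℝ) * q n x with hQ
  have hQc : ∀ n, Continuous (Q n) := fun n => continuous_const.mul (q n).continuous
  have hLF : LocallyFinite fun n => Function.support (Q n) := by
    intro x
    refine ⟨V x, (hVo x).mem_nhds (hVz x), ?_⟩
    refine (Set.finite_Iio (N x)).subset ?_
    intro i hi
    obtain ⟨y, hy1, hy2⟩ := hi
    by_contra hlt
    have hge : N x ≤ i := Nat.le_of_not_lt (by simpa [Set.mem_Iio] using hlt)
    have hyW : y ∈ W i := by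
      refine hsupp i y fun h0 => hy1 ?_
      simp [hQ, h0]
    have : y ∈ V x ∩ W i := ⟨hy2, hyW⟩
    rw [hN x i hge] at this
    exact this
  have hcont : Continuous fun x => ∑ᶠ n, Q n x := continuous_finsum hQc hLF
  obtain ⟨M, hM⟩ := hpc ⟨_, hcont⟩
  obtain ⟨m, hm⟩ := exists_nat_gt M
  obtain ⟨p, hp⟩ := hpeak m
  have hfin : (Function.support fun n => Q n p).Finite := hLF.point_finite p
  have hle : Q m p ≤ ∑ᶠ n, Q n p :=
    single_le_finsum m hfin (fun j => mul_nonneg (Nat.cast_nonneg j) (hq0 j p))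
  have hQm : Q m p = (m : ℝ) := by simp [hQ, hp]
  have := hM p
  simp only [ContinuousMap.coe_mk] at this
  have h1 : (m : ℝ) ≤ ∑ᶠ n, Q n p := hQm ▸ hle
  have h2 : ∑ᶠ n, Q n p ≤ M := le_trans (le_abs_self _) this
  linarith

theorem stmt12 (X : Type*) [TopologicalSpace X] [T35Space X]
    (hpc : Pseudocompact X) :
    (SelectivelyOmegaBounded X ↔ AscoliSpace X) ∧
    (AscoliSpace X ↔ SeqAscoliSpace X) := by
  have hAS : AscoliSpace X → SeqAscoliSpace X := by
    intro hA f g hfg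
    exact hA _ hfg.isCompact_insert_range
  have hSA : SelectivelyOmegaBounded X → AscoliSpace X := by
    intro hsel S hS
    unfold EquicontinuousSet Equicontinuous
    intro z
    by_contra hne
    rw [Metric.equicontinuousAt_iff_right] at hne
    push_neg at hne
    obtain ⟨ε, hε, hfreq⟩ := hne
    -- key: for every neighborhood produce a bad function and witness point
    have hkey : ∀ L : List C(X, ℝ), ∃ fy : C(X, ℝ) × X, fy.1 ∈ S ∧
        (∀ f ∈ L, dist (f z) (f fy.2) < ε / 4) ∧ ε ≤ dist (fy.1 z) (fy.1 fy.2) := by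
      intro L
      have hVo : IsOpen {y | ∀ f ∈ L, dist (f z) (f y) < ε / 4} := by
        have heq : {y | ∀ f ∈ L, dist (f z) (f y) < ε / 4} =
            ⋂ f ∈ {g : C(X, ℝ) | g ∈ L}, {y | dist (f z) (f y) < ε / 4} := by
          ext y; simp
        rw [heq]
        exact (List.finite_toSet L).isOpen_biInter fun f _ =>
          isOpen_lt (continuous_const.dist f.continuous) continuous_const
      have hVz : {y | ∀ f ∈ L, dist (f z) (f y) < ε / 4} ∈ 𝓝 z :=
        hVo.mem_nhds (by simp [hε])
      obtain ⟨y, hyV, hy⟩ := Filter.frequently_iff.mp hfreq hVz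
      obtain ⟨i, hi⟩ := hy
      exact ⟨((i : C(X, ℝ)), y), i.2, hyV, hi⟩
    choose step hstep1 hstep2 hstep3 using hkey
    classical
    set Ls : ℕ → List C(X, ℝ) := fun n => Nat.rec [] (fun _ L => (step L).1 :: L) n with hLs
    have hLs_succ : ∀ n, Ls (n + 1) = (step (Ls n)).1 :: Ls n := fun n => rfl
    set F : ℕ → C(X, ℝ) := fun n => (step (Ls n)).1 with hF
    have hmem : ∀ m n, m < n → F m ∈ Ls n := by
      intro m n
      induction n with
      | zero => omega
      | succ k ih =>
        intro hmn
        rw [hLs_succ]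
        rcases Nat.lt_succ_iff_lt_or_eq.mp hmn with h | h
        · exact List.mem_cons_of_mem _ (ih h)
        · subst h; exact List.mem_cons_self
    -- the open sets
    set U : ℕ → Set X := fun n =>
      {y | ∀ f ∈ Ls n, dist (f z) (f y) < ε / 4} ∩ {y | ε / 2 < dist (F n z) (F n y)} with hU
    have hUo : ∀ n, IsOpen (U n) := by
      intro n
      refine IsOpen.inter ?_ (isOpen_lt continuous_const
        (continuous_const.dist (F n).continuous)) 
      have heq : {y | ∀ f ∈ Ls n, dist (f z) (f y) < ε / 4} =
          ⋂ f ∈ {g : C(X, ℝ) | g ∈ Ls n}, {y | dist (f z) (f y) < ε / 4} := by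
        ext y; simp
      rw [heq]
      exact (List.finite_toSet _).isOpen_biInter fun f _ =>
        isOpen_lt (continuous_const.dist f.continuous) continuous_const
    have hUne : ∀ n, (U n).Nonempty := by
      intro n
      refine ⟨(step (Ls n)).2, hstep2 (Ls n), ?_⟩
      have := hstep3 (Ls n)
      simp only [Set.mem_setOf_eq]
      calc ε / 2 < ε := by linarith
        _ ≤ dist (F n z) (F n (step (Ls n)).2) := this
    obtain ⟨x, hxU, φ, hφ, hcomp⟩ := hsel U hUo hUne
    -- pass to the compact set K = insert z (closure (range (x ∘ φ)))
    set K : Set X := insert z (closure (Set.range (x ∘ φ))) with hK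
    have hKc : IsCompact K := hcomp.insert z
    haveI : CompactSpace ↥K := isCompact_iff_compactSpace.mp hKc
    have hzK : z ∈ K := Set.mem_insert _ _
    have hxK : ∀ j, x (φ j) ∈ K :=
      fun j => Set.mem_insert_of_mem _ (subset_closure ⟨j, rfl⟩)
    set u : ℕ → C(↥K, ℝ) := fun j => (F (φ j)).restrict K with hu
    have huT : ∀ j, u j ∈ (fun f : C(X, ℝ) => f.restrict K) '' S :=
      fun j => ⟨F (φ j), hstep1 _, rfl⟩
    have hT : IsCompact ((fun f : C(X, ℝ) => f.restrict K) '' S) :=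
      hS.image (ContinuousMap.continuous_restrict K)
    obtain ⟨a, _, ψ, hψ, hconv⟩ := hT.tendsto_subseq huT
    obtain ⟨N, hN⟩ := (Metric.tendsto_atTop.mp hconv) (ε / 16) (by linarith)
    have hd : dist (u (ψ (N + 1))) (u (ψ N)) < ε / 8 := by
      have h1 := hN N (le_refl N)
      have h2 := hN (N + 1) (by omega)
      calc dist (u (ψ (N + 1))) (u (ψ N))
          ≤ dist ((u ∘ ψ) (N + 1)) a + dist ((u ∘ ψ) N) a := dist_triangle_right _ _ _
        _ < ε / 8 := by simp only [Function.comp_apply] at h1 h2 ⊢; linarith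
    set m : ℕ := φ (ψ N) with hm
    set n : ℕ := φ (ψ (N + 1)) with hn
    have hmn : m < n := hφ (hψ (by omega))
    have hp : x n ∈ K := hxK (ψ (N + 1))
    -- bounds at the two points
    have hb1 : dist (F n ((⟨x n, hp⟩ : ↥K) : X)) (F m ((⟨x n, hp⟩ : ↥K) : X))
        ≤ dist (u (ψ (N + 1))) (u (ψ N)) := by
      have := ContinuousMap.dist_apply_le_dist (f := u (ψ (N + 1))) (g := u (ψ N))
        (⟨x n, hp⟩ : ↥K)
      simpa [hu, ContinuousMap.restrict_apply] using this
    have hb2 : dist (F n ((⟨z, hzK⟩ : ↥K) : X)) (F m ((⟨z, hzK⟩ : ↥K) : X))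
        ≤ dist (u (ψ (N + 1))) (u (ψ N)) := by
      have := ContinuousMap.dist_apply_le_dist (f := u (ψ (N + 1))) (g := u (ψ N))
        (⟨z, hzK⟩ : ↥K)
      simpa [hu, ContinuousMap.restrict_apply] using this
    simp only at hb1 hb2
    -- the selected point x n behaves
    have hx1 : ε / 2 < dist (F n z) (F n (x n)) := (hxU n).2
    have hx2 : dist (F m z) (F m (x n)) < ε / 4 := (hxU n).1 (F m) (hmem m n hmn)
    -- triangle inequality contradiction
    have htri : dist (F n z) (F n (x n)) ≤
        dist (F n z) (F m z) + dist (F m z) (F m (x n)) + dist (F m (x n)) (F n (x n)) :=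
      dist_triangle4 _ _ _ _
    have e1 : dist (F n z) (F m z) < ε / 8 := lt_of_le_of_lt hb2 hd
    have e2 : dist (F m (x n)) (F n (x n)) < ε / 8 := by
      rw [dist_comm]; exact lt_of_le_of_lt hb1 hd
    linarith
  have hSS : SeqAscoliSpace X → SelectivelyOmegaBounded X := by
    intro hseq
    by_contra hns
    unfold SelectivelyOmegaBounded at hns
    push_neg at hns
    obtain ⟨U, hUo, hUne, hbad⟩ := hns
    -- bump functions
    have hbump : ∀ n, ∃ G : C(X, ℝ), G (hUne n).choose = 1 ∧ (∀ x, 0 ≤ G x ∧ G x ≤ 1) ∧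
        ∀ x, x ∉ U n → G x = 0 := by
      intro n
      obtain ⟨f, hfc, hf0, hf1⟩ := CompletelyRegularSpace.completely_regular
        (hUne n).choose (U n)ᶜ (hUo n).isClosed_compl (by simp [(hUne n).choose_spec])
      refine ⟨⟨fun x => 1 - (f x : ℝ), continuous_const.sub (continuous_subtype_val.comp hfc)⟩,
        ?_, ?_, ?_⟩
      · simp [hf0]
      · intro x
        constructor
        · simp [(f x).2.2]
        · have := (f x).2.1; simp; linarith
      · intro x hx
        have : f x = 1 := hf1 hx
        simp [this]
    choose G hG1 hG01 hG0 using hbump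
    set W : ℕ → Set X := fun n => {x | 1 / 2 < G n x} with hW
    -- every compact set meets only finitely many U n
    have hfin : ∀ {C : Set X}, IsCompact C → {n | (C ∩ U n).Nonempty}.Finite :=
      fun hC => hits_finite hUne hbad hC
    -- G tends to 0 in the compact-open topology
    have htend : Tendsto G atTop (𝓝 (0 : C(X, ℝ))) := by
      rw [ContinuousMap.tendsto_iff_forall_isCompact_tendstoUniformlyOn]
      intro K hK
      rw [Metric.tendstoUniformlyOn_iff]
      intro ε hε
      obtain ⟨N, hN⟩ := (hfin hK).bddAbove
      filter_upwards [eventually_gt_atTop N] with n hn x hx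
      have hxU : x ∉ U n := by
        intro hxU
        exact absurd (hN ⟨x, hx, hxU⟩) (not_le.mpr hn)
      simp [hG0 n x hxU, hε]
    -- cluster point of the W n
    have hq : ∀ n, ∃ p, (2 * G n p - 1) ⊔ 0 = 1 := by
      intro n
      exact ⟨(hUne n).choose, by rw [hG1 n]; norm_num⟩
    obtain ⟨z, hz⟩ := exists_cluster hpc W
      (fun n => ⟨fun x => (2 * G n x - 1) ⊔ 0,
        ((continuous_const.mul (G n).continuous).sub continuous_const).max continuous_const⟩)
      (fun n x => le_max_right _ _) hq
      (by
        intro n x hx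
        simp only [ContinuousMap.coe_mk, ne_eq] at hx
        have : 0 < 2 * G n x - 1 := by
          by_contra h
          push_neg at h
          exact hx (max_eq_right h)
        simp only [hW, Set.mem_setOf_eq]
        linarith)
    -- z is eventually not in U n
    obtain ⟨N₀, hN₀⟩ := (hfin isCompact_singleton (C := {z})).bddAbove
    -- refute equicontinuity at z
    have hEq := hseq G 0 htend
    unfold EquicontinuousSet Equicontinuous at hEq
    have hEz := hEq z
    rw [Metric.equicontinuousAt_iff_right] at hEz
    have hev := hEz (1/2) (by norm_num)
    rw [Filter.eventually_iff, mem_nhds_iff] at hev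
    obtain ⟨V, hVsub, hVo, hVz⟩ := hev
    obtain ⟨n, hnN, y, hyV, hyW⟩ := hz V hVo hVz (N₀ + 1)
    have hzU : z ∉ U n := by
      intro hzU
      exact absurd (hN₀ (⟨z, rfl, hzU⟩ : ({z} ∩ U n).Nonempty)) (by omega)
    have hGnz : G n z = 0 := hG0 n z hzU
    have hkey := hVsub hyV ⟨G n, Set.mem_insert_of_mem _ (Set.mem_range_self n)⟩
    simp only [hGnz, Real.dist_eq, zero_sub, abs_neg] at hkey
    have : (1:ℝ)/2 < G n y := hyW
    rw [abs_of_nonneg (hG01 n y).1] at hkey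
    linarith
  exact ⟨⟨hSA, fun h => hSS (hAS h)⟩, ⟨hAS, fun h => hSA (hSS h)⟩⟩
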